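/- Let ξ, η, ζ ∈ Q±* be freely irreducible words following the same pattern. Then for every k ∈ ℕ there exist words w, v ∈ X*₍₁₎ with |w| = |v| ≥ k such that the dual mappings of the automaton B satisfy D_{1,w}(ξ) = η and D_{1,v}(ξ) = ζ. -/

import Mathlib

/-- The four states `a, b, a⁻¹, b⁻¹` of the automaton `B`. -/
inductive Qpm
  | a | b | ai | bi
  deriving DecidableEq

open Qpm

/-- The `r`-cycle `σ = (1,2,…,r)` on `{1,…,r}`. -/
def csigma (r x : ℕ) : ℕ := if x = r then 1 else x + 1

/-- The inverse of the `r`-cycle `σ`. -/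
def csigmaInv (r x : ℕ) : ℕ := if x = 1 then r else x - 1

/-- The transposition `τ = (1,2)`. -/
def ctau (x : ℕ) : ℕ := if x = 1 then 2 else if x = 2 then 1 else x

/-- The transition function of the automaton `B`: states are fixed on letters
other than 1,2; on letter 1 it swaps `a ↔ b`; on letter 2 it swaps `a⁻¹ ↔ b⁻¹`. -/
def phiB (x : ℕ) (q : Qpm) : Qpm :=
  if x = 1 then
    (match q with
     | a => b
     | b => a
     | q => q)
  else if x = 2 then
    (match q with
     | ai => bi
     | bi => ai
     | q => q)
  else q

/-- The output function of `B`: `σᵢ` at `a`, `σᵢ⁻¹` at `a⁻¹`, `τ` at `b, b⁻¹`. -/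
def psiB (ri : ℕ) (q : Qpm) (x : ℕ) : ℕ :=
  match q with
  | a => csigma ri x
  | ai => csigmaInv ri x
  | _ => ctau x

/-- The dual mapping `D_{i,x}` of the automaton `B` (over `Xᵢ = {1,…,rᵢ}`). -/
def dualB (r : ℕ → ℕ) (i : ℕ) : ℕ → List Qpm → List Qpm
  | _, [] => []
  | x, q :: qs => phiB x q :: dualB r i (psiB (r i) q x) qs

/-- `D_{i,w}`, the composition of dual mappings of `B` along the word `w`. -/
def dualWB (r : ℕ → ℕ) : ℕ → List ℕ → List Qpm → List Qpm
  | _, [], ξ => ξ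
  | i, x :: xs, ξ => dualWB r (i + 1) xs (dualB r i x ξ)

/-- The formal inverse of a state. -/
def qinv : Qpm → Qpm
  | a => ai
  | ai => a
  | b => bi
  | bi => b

/-- The swap `a ↔ b`, `a⁻¹ ↔ b⁻¹` (the tilde operation). -/
def til : Qpm → Qpm
  | a => b
  | b => a
  | ai => bi
  | bi => ai

/-- The pattern symbol of a state: `true` stands for `*`, `false` for `*⁻¹`. -/
def patt : Qpm → Bool
  | a => true
  | b => true
  | _ => false

/-- A word over `Q±` is freely irreducible if no two consecutive letters are
mutually inverse. -/
def FreelyIrred (ξ : List Qpm) : Prop := List.Chain' (fun p q => q ≠ qinv p) ξ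

/-- A word over the changing alphabet `Xᵢ = {1,…,rᵢ}`, starting at index `i`. -/
def ValidB (r : ℕ → ℕ) : ℕ → List ℕ → Prop
  | _, [] => True
  | i, x :: xs => x ∈ Set.Icc 1 (r i) ∧ ValidB r (i + 1) xs

section Infra

variable (r : ℕ → ℕ)

@[simp] lemma dualB_nil (i x : ℕ) : dualB r i x [] = [] := rfl

@[simp] lemma dualB_cons (i x : ℕ) (q : Qpm) (qs : List Qpm) :
    dualB r i x (q :: qs) = phiB x q :: dualB r i (psiB (r i) q x) qs := rfl

@[simp] lemma dualWB_nil (i : ℕ) (ξ : List Qpm) : dualWB r i [] ξ = ξ := rfl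

@[simp] lemma dualWB_cons (i x : ℕ) (xs : List ℕ) (ξ : List Qpm) :
    dualWB r i (x :: xs) ξ = dualWB r (i + 1) xs (dualB r i x ξ) := rfl

lemma dualWB_append (i : ℕ) (w v : List ℕ) (ξ : List Qpm) :
    dualWB r i (w ++ v) ξ = dualWB r (i + w.length) v (dualWB r i w ξ) := by
  induction w generalizing i ξ with
  | nil => simp
  | cons x xs ih =>
      simp only [List.cons_append, dualWB_cons, ih, List.length_cons]
      ring_nf

lemma dualWB_nil_list (i : ℕ) (w : List ℕ) : dualWB r i w [] = [] := by
  induction w generalizing i with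
  | nil => rfl
  | cons x xs ih => simp [ih]

@[simp] lemma length_dualB (i x : ℕ) (ξ : List Qpm) :
    (dualB r i x ξ).length = ξ.length := by
  induction ξ generalizing x with
  | nil => rfl
  | cons q qs ih => simp [ih]

@[simp] lemma length_dualWB (i : ℕ) (w : List ℕ) (ξ : List Qpm) :
    (dualWB r i w ξ).length = ξ.length := by
  induction w generalizing i ξ with
  | nil => rfl
  | cons x xs ih => simp [ih]

@[simp] lemma patt_phiB (x : ℕ) (q : Qpm) : patt (phiB x q) = patt q := by
  unfold phiB
  split_ifs <;> cases q <;> rfl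

lemma map_patt_dualB (i x : ℕ) (ξ : List Qpm) :
    (dualB r i x ξ).map patt = ξ.map patt := by
  induction ξ generalizing x with
  | nil => rfl
  | cons q qs ih => simp [ih]

lemma map_patt_dualWB (i : ℕ) (w : List ℕ) (ξ : List Qpm) :
    (dualWB r i w ξ).map patt = ξ.map patt := by
  induction w generalizing i ξ with
  | nil => rfl
  | cons x xs ih => simp [ih, map_patt_dualB]

lemma validB_append (i : ℕ) (w v : List ℕ) :
    ValidB r i w → ValidB r (i + w.length) v → ValidB r i (w ++ v) := by
  induction w generalizing i with
  | nil => intro _ h; simpa using h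
  | cons x xs ih =>
      intro hw hv
      refine ⟨hw.1, ih (i + 1) hw.2 ?_⟩
      have : i + 1 + xs.length = i + (x :: xs).length := by simp; ring
      rw [this]; exact hv

lemma validB_replicate (i m e : ℕ) (h : ∀ j, i ≤ j → 1 ≤ e ∧ e ≤ r j) :
    ValidB r i (List.replicate m e) := by
  induction m generalizing i with
  | zero => trivial
  | succ n ih =>
      refine ⟨?_, ih (i + 1) (fun j hj => h j (by omega))⟩
      have := h i le_rfl
      simp [Set.mem_Icc]; omega

lemma validB_length (i : ℕ) (w : List ℕ) : ValidB r i w → ∀ k, k < w.length →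
    1 ≤ w[k]! ∧ w[k]! ≤ r (i + k) := by
  induction w generalizing i with
  | nil => intro _ k hk; simp at hk
  | cons x xs ih =>
      intro h k hk
      cases k with
      | zero => simpa [Set.mem_Icc] using h.1
      | succ n =>
          have := ih (i + 1) h.2 n (by simpa using hk)
          simpa [Nat.add_assoc, Nat.add_comm 1 n] using this

lemma psiB_range (rr x : ℕ) (q : Qpm) (hr : 2 ≤ rr) (h1 : 1 ≤ x) (h2 : x ≤ rr) :
    1 ≤ psiB rr q x ∧ psiB rr q x ≤ rr := by
  cases q <;> simp [psiB, csigma, csigmaInv, ctau] <;> split_ifs <;> omega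

end Infra
section Micro

@[simp] lemma til_til (q : Qpm) : til (til q) = q := by cases q <;> rfl

@[simp] lemma patt_til (q : Qpm) : patt (til q) = patt q := by cases q <;> rfl

lemma til_ne (q : Qpm) : til q ≠ q := by cases q <;> decide

lemma qpm_same_patt (q q' : Qpm) (h : patt q' = patt q) : q' = q ∨ q' = til q := by
  cases q <;> cases q' <;> simp_all [patt, til] <;> decide

lemma qpm_forced (q s : Qpm) (h : patt s ≠ patt q) (h2 : s ≠ qinv q) :
    s = til (qinv q) := by
  cases q <;> cases s <;> simp_all [patt, qinv, til]

/-- The flip letter of a pattern. -/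
def fLet (p : Bool) : ℕ := if p then 1 else 2

/-- The free (other active) letter of a state. -/
def oLet (q : Qpm) : ℕ := if patt q then 2 else 1

@[simp] lemma oLet_til (q : Qpm) : oLet (til q) = oLet q := by cases q <;> rfl

lemma oLet_cases (q : Qpm) : oLet q = 1 ∨ oLet q = 2 := by
  cases q <;> simp [oLet, patt]

lemma phiB_eq_flip (x : ℕ) (q : Qpm) :
    phiB x q = if x = fLet (patt q) then til q else q := by
  cases q <;> unfold phiB fLet patt til <;> split_ifs <;> simp_all

end Micro

section FIpres

variable (r : ℕ → ℕ)

lemma fi_pair (rr x : ℕ) (q q₂ : Qpm) (hr : 2 ≤ rr) (h1 : 1 ≤ x) (h2 : x ≤ rr)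
    (h : q₂ ≠ qinv q) : phiB (psiB rr q x) q₂ ≠ qinv (phiB x q) := by
  cases q <;> cases q₂ <;>
    simp_all [phiB, psiB, qinv, csigma, csigmaInv, ctau] <;>
    split_ifs <;> simp_all <;> omega

lemma fi_dualB (i : ℕ) : ∀ (ξ : List Qpm) (x : ℕ), 2 ≤ r i → 1 ≤ x → x ≤ r i →
    FreelyIrred ξ → FreelyIrred (dualB r i x ξ)
  | [], _, _, _, _, _ => by simp [FreelyIrred, List.Chain']
  | [q], x, _, _, _, _ => by simp [FreelyIrred, List.Chain']
  | q :: q₂ :: qs, x, hr, h1, h2, hfi => by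
      have hfi' : FreelyIrred (q₂ :: qs) := (List.isChain_cons_cons.mp hfi).2
      have hpair : q₂ ≠ qinv q := (List.isChain_cons_cons.mp hfi).1
      have hrange := psiB_range (r i) x q hr h1 h2
      have ih := fi_dualB i (q₂ :: qs) (psiB (r i) q x) hr hrange.1 hrange.2 hfi'
      simp only [dualB_cons] at ih ⊢
      exact List.isChain_cons_cons.mpr ⟨fi_pair (r i) x q q₂ hr h1 h2 hpair, ih⟩

lemma fi_dualWB (i : ℕ) (w : List ℕ) (ξ : List Qpm) (hge : ∀ j, 2 ≤ r j) :
    ValidB r i w → FreelyIrred ξ → FreelyIrred (dualWB r i w ξ) := by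
  induction w generalizing i ξ with
  | nil => intro _ h; exact h
  | cons x xs ih =>
      intro hv hfi
      have hx : 1 ≤ x ∧ x ≤ r i := by simpa [Set.mem_Icc] using hv.1
      exact ih (i + 1) _ hv.2 (fi_dualB r i ξ x (hge i) hx.1 hx.2 hfi)

end FIpres
section HeadRun

variable (r : ℕ → ℕ)

/-- Iterated tilde. -/
def tpow (k : ℕ) (q : Qpm) : Qpm := if k % 2 = 0 then q else til q

lemma tpow_succ (k : ℕ) (q : Qpm) : tpow (k + 1) q = tpow k (til q) := by
  rcases Nat.even_or_odd k with h | h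
  · have : k % 2 = 0 := Nat.even_iff.mp h
    simp [tpow, this, Nat.succ_mod_two_eq_one_iff.mpr this]
  · have h1 : k % 2 = 1 := Nat.odd_iff.mp h
    simp [tpow, h1, Nat.succ_mod_two_eq_zero_iff.mpr h1]

lemma head_dualWB (w : List ℕ) : ∀ (i : ℕ) (s : Qpm) (t : List Qpm),
    (dualWB r i w (s :: t)).head? = some (tpow (w.count (fLet (patt s))) s) := by
  induction w with
  | nil => intro i s t; simp [tpow]
  | cons x xs ih =>
      intro i s t
      simp only [dualWB_cons, dualB_cons]
      rw [ih (i + 1) (phiB x s) (dualB r i (psiB (r i) s x) t)]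
      rw [phiB_eq_flip]
      by_cases hx : x = fLet (patt s)
      · simp only [hx, if_pos rfl, if_true]
        rw [List.count_cons_self]
        simp only [patt_til]
        rw [tpow_succ]
      · simp only [if_neg hx]
        rw [List.count_cons_of_ne (fun h => hx (by simp [h]))]

end HeadRun

section BuildX

variable (r : ℕ → ℕ)

/-- Inverse of the output function. -/
def psiInv (rr : ℕ) (q : Qpm) (y : ℕ) : ℕ :=
  match q with
  | Qpm.a => csigmaInv rr y
  | Qpm.ai => csigma rr y
  | _ => ctau y

lemma psiInv_range (rr y : ℕ) (q : Qpm) (hr : 2 ≤ rr) (h1 : 1 ≤ y) (h2 : y ≤ rr) :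
    1 ≤ psiInv rr q y ∧ psiInv rr q y ≤ rr := by
  cases q <;> simp [psiInv, csigma, csigmaInv, ctau] <;> split_ifs <;> omega

lemma psiB_psiInv (rr y : ℕ) (q : Qpm) (hr : 2 ≤ rr) (h1 : 1 ≤ y) (h2 : y ≤ rr) :
    psiB rr q (psiInv rr q y) = y := by
  cases q <;> simp [psiInv, psiB, csigma, csigmaInv, ctau] <;> split_ifs <;> omega

lemma phiB_psiInv (rr y : ℕ) (q : Qpm) (hr : 2 ≤ rr) (h1 : 1 ≤ y) (h2 : y ≤ rr) :
    phiB (psiInv rr q y) q = if y = oLet q then til q else q := by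
  cases q <;>
    simp [psiInv, phiB, oLet, patt, til, csigma, csigmaInv, ctau] <;>
    split_ifs <;> simp_all <;> omega

/-- Builds the input word realizing a given derived word on the tail. -/
def buildX (i : ℕ) (h : Qpm) : List ℕ → List ℕ
  | [] => []
  | y :: ys => psiInv (r i) h y :: buildX (i + 1) (phiB (psiInv (r i) h y) h) ys

lemma buildX_valid (ys : List ℕ) : ∀ (i : ℕ) (h : Qpm), (∀ j, 2 ≤ r j) →
    ValidB r i ys → ValidB r i (buildX r i h ys) := by
  induction ys with
  | nil => intro i h _ _; trivial
  | cons y ys ih =>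
      intro i h hge hv
      have hy : 1 ≤ y ∧ y ≤ r i := by simpa [Set.mem_Icc] using hv.1
      have := psiInv_range (r i) y h (hge i) hy.1 hy.2
      exact ⟨by simp [Set.mem_Icc]; omega, ih _ _ hge hv.2⟩

lemma buildX_cons (ys : List ℕ) : ∀ (i : ℕ) (h : Qpm) (t : List Qpm),
    (∀ j, 2 ≤ r j) → ValidB r i ys →
    dualWB r i (buildX r i h ys) (h :: t) =
      tpow (ys.count (oLet h)) h :: dualWB r i ys t := by
  induction ys with
  | nil => intro i h t _ _; simp [buildX, tpow]
  | cons y ys ih =>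
      intro i h t hge hv
      have hy : 1 ≤ y ∧ y ≤ r i := by simpa [Set.mem_Icc] using hv.1
      simp only [buildX, dualWB_cons, dualB_cons]
      rw [psiB_psiInv (r i) y h (hge i) hy.1 hy.2]
      rw [ih (i + 1) (phiB (psiInv (r i) h y) h) (dualB r i y t) hge hv.2]
      rw [phiB_psiInv (r i) y h (hge i) hy.1 hy.2]
      by_cases hc : y = oLet h
      · simp only [hc, if_pos rfl, if_true, oLet_til, List.count_cons_self]
        rw [tpow_succ]
      · simp only [if_neg hc]
        rw [List.count_cons_of_ne (fun hh => hc (by simp [hh]))]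

end BuildX
section Inv

lemma phiB_invol (x : ℕ) (q : Qpm) : phiB x (phiB x q) = q := by
  unfold phiB; split_ifs <;> cases q <;> rfl

lemma phiB_id3 (x : ℕ) (q : Qpm) (h1 : x ≠ 1) (h2 : x ≠ 2) : phiB x q = q := by
  unfold phiB; split_ifs <;> simp_all

lemma psiB_a (rr e : ℕ) (h : e ≠ rr) : psiB rr Qpm.a e = e + 1 := by
  simp [psiB, csigma, if_neg h]

lemma psiB_a_top (rr : ℕ) : psiB rr Qpm.a rr = 1 := by simp [psiB, csigma]

lemma psiB_ai (rr e : ℕ) (h : e ≠ 1) : psiB rr Qpm.ai e = e - 1 := by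
  simp [psiB, csigmaInv, if_neg h]

lemma psiB_ai_one (rr : ℕ) : psiB rr Qpm.ai 1 = rr := by simp [psiB, csigmaInv]

lemma psiB_b (rr e : ℕ) (h1 : e ≠ 1) (h2 : e ≠ 2) : psiB rr Qpm.b e = e := by
  simp [psiB, ctau, if_neg h1, if_neg h2]

lemma psiB_bi (rr e : ℕ) (h1 : e ≠ 1) (h2 : e ≠ 2) : psiB rr Qpm.bi e = e := by
  simp [psiB, ctau, if_neg h1, if_neg h2]

lemma inv_lemma (r : ℕ → ℕ) : ∀ (t : List Qpm) (j1 j2 e1 e2 : ℕ),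
    r j1 ≤ r j2 → t.length + 1 ≤ r j1 →
    ((e1 = e2 ∧ 1 ≤ e1 ∧ e1 + t.length ≤ r j1 + 1) ∨
     (e2 = e1 + (r j2 - r j1) ∧ t.length + 2 ≤ e1 ∧ e1 ≤ r j1)) →
    dualB r j2 e2 (dualB r j1 e1 t) = t
  | [], _, _, _, _, _, _, _ => by simp
  | q :: t', j1, j2, e1, e2, hr, hlen, hcase => by
    simp only [List.length_cons] at hlen hcase
    have hr1 : 2 ≤ r j1 := by omega
    simp only [dualB_cons]
    rcases hcase with ⟨rfl, he1, hbd⟩ | ⟨rfl, hlo, hhi⟩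
    · -- E case: same letter e1 on both passes
      rw [phiB_invol]
      rcases t' with _ | ⟨q₂, t''⟩
      · simp
      have hlen' : (q₂ :: t'').length + 1 ≤ r j1 := by
        simp at hlen ⊢; omega
      have hL : (q₂ :: t'').length + 2 ≤ r j1 := by simp at hlen ⊢; omega
      congr 1
      by_cases h1 : e1 = 1
      · subst h1
        cases q
        · -- a
          rw [psiB_a _ _ (by omega), show phiB 1 Qpm.a = Qpm.b from rfl]
          rw [show psiB (r j2) Qpm.b 1 = 2 from rfl]
          exact inv_lemma r _ j1 j2 _ _ hr hlen' (Or.inl ⟨rfl, by omega, by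
            simp at hbd ⊢; omega⟩)
        · -- b
          rw [show psiB (r j1) Qpm.b 1 = 2 from rfl, show phiB 1 Qpm.b = Qpm.a from rfl]
          rw [psiB_a _ _ (by omega)]
          exact inv_lemma r _ j1 j2 _ _ hr hlen' (Or.inl ⟨rfl, by omega, by
            simp at hbd ⊢; omega⟩)
        · -- ai
          rw [psiB_ai_one, show phiB 1 Qpm.ai = Qpm.ai from rfl, psiB_ai_one]
          exact inv_lemma r _ j1 j2 _ _ hr hlen' (Or.inr ⟨by omega, by
            simpa using hL, le_rfl⟩)
        · -- bi
          rw [show psiB (r j1) Qpm.bi 1 = 2 from rfl,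
            show phiB 1 Qpm.bi = Qpm.bi from rfl,
            show psiB (r j2) Qpm.bi 1 = 2 from rfl]
          exact inv_lemma r _ j1 j2 _ _ hr hlen' (Or.inl ⟨rfl, by omega, by
            simp at hbd ⊢; omega⟩)
      · by_cases h2 : e1 = 2
        · subst h2
          cases q
          · -- a
            rw [psiB_a _ _ (by simp at hL; omega), show phiB 2 Qpm.a = Qpm.a from rfl,
              psiB_a _ _ (by simp at hL; omega)]
            exact inv_lemma r _ j1 j2 _ _ hr hlen' (Or.inl ⟨rfl, by omega, by
              simp at hL ⊢; omega⟩)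
          · -- b
            rw [show psiB (r j1) Qpm.b 2 = 1 from rfl, show phiB 2 Qpm.b = Qpm.b from rfl,
              show psiB (r j2) Qpm.b 2 = 1 from rfl]
            exact inv_lemma r _ j1 j2 _ _ hr hlen' (Or.inl ⟨rfl, by omega, by
              simp at hlen' ⊢; omega⟩)
          · -- ai
            rw [psiB_ai _ _ (by omega), show phiB 2 Qpm.ai = Qpm.bi from rfl,
              show psiB (r j2) Qpm.bi 2 = 1 from rfl]
            exact inv_lemma r _ j1 j2 _ _ hr hlen' (Or.inl ⟨rfl, by omega, by
              simp at hlen' ⊢; omega⟩)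
          · -- bi
            rw [show psiB (r j1) Qpm.bi 2 = 1 from rfl, show phiB 2 Qpm.bi = Qpm.ai from rfl,
              psiB_ai _ _ (by omega)]
            exact inv_lemma r _ j1 j2 _ _ hr hlen' (Or.inl ⟨rfl, by omega, by
              simp at hlen' ⊢; omega⟩)
        · -- e1 ≥ 3
          have h3 : 3 ≤ e1 := by omega
          have hlt : e1 < r j1 := by simp at hbd; omega
          rw [phiB_id3 e1 q h1 h2]
          cases q
          · rw [psiB_a _ _ (by omega), psiB_a _ _ (by omega)]
            exact inv_lemma r _ j1 j2 _ _ hr hlen' (Or.inl ⟨rfl, by omega, by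
              simp at hbd ⊢; omega⟩)
          · rw [psiB_b (r j1) _ h1 h2, psiB_b (r j2) _ h1 h2]
            exact inv_lemma r _ j1 j2 _ _ hr hlen' (Or.inl ⟨rfl, by omega, by
              simp at hbd ⊢; omega⟩)
          · rw [psiB_ai (r j1) _ h1, psiB_ai (r j2) _ (by omega)]
            exact inv_lemma r _ j1 j2 _ _ hr hlen' (Or.inl ⟨rfl, by omega, by
              simp at hbd ⊢; omega⟩)
          · rw [psiB_bi (r j1) _ h1 h2, psiB_bi (r j2) _ h1 h2]
            exact inv_lemma r _ j1 j2 _ _ hr hlen' (Or.inl ⟨rfl, by omega, by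
              simp at hbd ⊢; omega⟩)
    · -- D case: shifted dormant letters
      have h31 : 3 ≤ e1 := by omega
      have h32 : 3 ≤ e1 + (r j2 - r j1) := by omega
      rw [phiB_id3 e1 q (by omega) (by omega), phiB_id3 _ q (by omega) (by omega)]
      congr 1
      have hlen' : t'.length + 1 ≤ r j1 := by omega
      cases q
      · -- a
        by_cases htop : e1 = r j1
        · subst htop
          rw [psiB_a_top, show r j1 + (r j2 - r j1) = r j2 from by omega, psiB_a_top]
          exact inv_lemma r _ j1 j2 _ _ hr hlen' (Or.inl ⟨rfl, by omega, by omega⟩)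
        · rw [psiB_a _ _ htop, psiB_a _ _ (by omega)]
          exact inv_lemma r _ j1 j2 _ _ hr hlen' (Or.inr ⟨by omega, by omega, by omega⟩)
      · rw [psiB_b _ _ (by omega) (by omega), psiB_b _ _ (by omega) (by omega)]
        exact inv_lemma r _ j1 j2 _ _ hr hlen' (Or.inr ⟨by omega, by omega, by omega⟩)
      · rw [psiB_ai _ _ (by omega), psiB_ai _ _ (by omega)]
        exact inv_lemma r _ j1 j2 _ _ hr hlen' (Or.inr ⟨by omega, by omega, by omega⟩)
      · rw [psiB_bi _ _ (by omega) (by omega), psiB_bi _ _ (by omega) (by omega)]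
        exact inv_lemma r _ j1 j2 _ _ hr hlen' (Or.inr ⟨by omega, by omega, by omega⟩)

end Inv
section Undo

/-- The letter undoing `x` (applied at a later index `j`). -/
def invLet (r : ℕ → ℕ) (N i j x : ℕ) : ℕ :=
  if x + N ≤ r i + 1 then x else x + (r j - r i)

/-- The word undoing `w` (applied starting from index `j`). -/
def revUndo (r : ℕ → ℕ) (N : ℕ) : ℕ → List ℕ → ℕ → List ℕ
  | _, [], _ => []
  | i, x :: rest, j => revUndo r N (i + 1) rest j ++ [invLet r N i (j + rest.length) x]

lemma revUndo_length (r : ℕ → ℕ) (N : ℕ) :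
    ∀ (w : List ℕ) (i j : ℕ), (revUndo r N i w j).length = w.length
  | [], _, _ => rfl
  | x :: rest, i, j => by
      simp [revUndo, revUndo_length r N rest (i + 1) j]

lemma revUndo_valid (r : ℕ → ℕ) (N : ℕ) (hmono : Monotone r) :
    ∀ (w : List ℕ) (i j : ℕ), ValidB r i w → i + w.length ≤ j →
      ValidB r j (revUndo r N i w j)
  | [], _, _, _, _ => trivial
  | x :: rest, i, j, hv, hij => by
      simp only [List.length_cons] at hij
      have hx : 1 ≤ x ∧ x ≤ r i := by simpa [Set.mem_Icc] using hv.1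
      refine validB_append r j _ _
        (revUndo_valid r N hmono rest (i + 1) j hv.2 (by omega)) ?_
      rw [revUndo_length]
      refine ⟨?_, trivial⟩
      have h1 : r i ≤ r (j + rest.length) := hmono (by omega)
      simp only [invLet, Set.mem_Icc]
      split_ifs <;> omega

lemma revUndo_count (r : ℕ → ℕ) (N : ℕ) (c : ℕ) (hc : c ≤ 2) (hN : 1 ≤ N) :
    ∀ (w : List ℕ) (i j : ℕ), (∀ k, i ≤ k → 2 * N + 2 ≤ r k) →
      (revUndo r N i w j).count c = w.count c
  | [], _, _, _ => rfl
  | x :: rest, i, j, hbig => by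
      simp only [revUndo, List.count_append, List.count_cons, List.count_nil]
      rw [revUndo_count r N c hc hN rest (i + 1) j (fun k hk => hbig k (by omega))]
      have hbi := hbig i le_rfl
      have hiff : (invLet r N i (j + rest.length) x = c) ↔ (x = c) := by
        simp only [invLet]
        split_ifs with h
        · exact Iff.rfl
        · constructor
          · intro he; omega
          · intro he; omega
      by_cases hxc : x = c
      · subst hxc
        simp [List.count_cons, hiff.mpr rfl]
      · have hne : invLet r N i (j + rest.length) x ≠ c := fun he => hxc (hiff.mp he)
        simp [List.count_cons, hne, hxc]

lemma revUndo_spec (r : ℕ → ℕ) (hmono : Monotone r) (N : ℕ) :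
    ∀ (w : List ℕ) (i j : ℕ) (χ : List Qpm), ValidB r i w → χ.length = N →
      i + w.length ≤ j → 2 * N + 2 ≤ r i →
      dualWB r j (revUndo r N i w j) (dualWB r i w χ) = χ
  | [], _, _, _, _, _, _, _ => rfl
  | x :: rest, i, j, χ, hv, hlen, hij, hbig => by
      have hx : 1 ≤ x ∧ x ≤ r i := by simpa [Set.mem_Icc] using hv.1
      simp only [revUndo, dualWB_cons]
      rw [dualWB_append, revUndo_length]
      rw [revUndo_spec r hmono N rest (i + 1) j (dualB r i x χ) hv.2
        (by rw [length_dualB]; exact hlen) (by simp at hij ⊢; omega)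
        (le_trans hbig (hmono (by omega)))]
      simp only [dualWB_cons, dualWB_nil]
      have hmj : r i ≤ r (j + rest.length) := hmono (by omega)
      apply inv_lemma r χ i (j + rest.length)
      · exact hmj
      · omega
      · by_cases hcase : x + N ≤ r i + 1
        · exact Or.inl ⟨by simp [invLet, if_pos hcase], hx.1, by omega⟩
        · exact Or.inr ⟨by simp [invLet, if_neg hcase], by omega, hx.2⟩

end Undo

section Inert

variable (r : ℕ → ℕ)

lemma inert_dualB : ∀ (u : List Qpm) (j e : ℕ), u.length + 2 ≤ e →
    e + u.length ≤ r j → dualB r j e u = u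
  | [], _, _, _, _ => rfl
  | q :: u', j, e, hlo, hhi => by
      simp only [List.length_cons] at hlo hhi
      simp only [dualB_cons]
      rw [phiB_id3 e q (by omega) (by omega)]
      congr 1
      cases q
      · rw [psiB_a _ _ (by omega)]
        exact inert_dualB u' j (e + 1) (by omega) (by omega)
      · rw [psiB_b _ _ (by omega) (by omega)]
        exact inert_dualB u' j e (by omega) (by omega)
      · rw [psiB_ai _ _ (by omega)]
        exact inert_dualB u' j (e - 1) (by omega) (by omega)
      · rw [psiB_bi _ _ (by omega) (by omega)]
        exact inert_dualB u' j e (by omega) (by omega)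

lemma pad_id (u : List Qpm) (e : ℕ) : ∀ (m j : ℕ),
    (∀ k, j ≤ k → u.length + 2 ≤ e ∧ e + u.length ≤ r k) →
    dualWB r j (List.replicate m e) u = u
  | 0, _, _ => rfl
  | m + 1, j, h => by
      simp only [List.replicate_succ, dualWB_cons]
      rw [inert_dualB r u j e (h j le_rfl).1 (h j le_rfl).2]
      exact pad_id u e m (j + 1) (fun k hk => h k (by omega))

end Inert

section Canonical

variable (r : ℕ → ℕ)

def canA (P : List Bool) : List Qpm := P.map (fun b => if b then Qpm.a else Qpm.bi)
def canB (P : List Bool) : List Qpm := P.map (fun b => if b then Qpm.b else Qpm.ai)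

@[simp] lemma canA_patt (P : List Bool) : (canA P).map patt = P := by
  induction P with
  | nil => rfl
  | cons pb P ih => cases pb <;> simp [canA, patt] at ih ⊢ <;> exact ih

@[simp] lemma canB_patt (P : List Bool) : (canB P).map patt = P := by
  induction P with
  | nil => rfl
  | cons pb P ih => cases pb <;> simp [canB, patt] at ih ⊢ <;> exact ih

lemma fi_canA : ∀ P : List Bool, FreelyIrred (canA P)
  | [] => by simp [FreelyIrred, List.Chain', canA]
  | [pb] => by simp [FreelyIrred, List.Chain', canA]
  | pb :: pb' :: P => by
      have ih := fi_canA (pb' :: P)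
      simp only [canA, List.map_cons] at ih ⊢
      refine List.isChain_cons_cons.mpr ⟨?_, ih⟩
      cases pb <;> cases pb' <;> simp [qinv]

lemma fi_canB : ∀ P : List Bool, FreelyIrred (canB P)
  | [] => by simp [FreelyIrred, List.Chain', canB]
  | [pb] => by simp [FreelyIrred, List.Chain', canB]
  | pb :: pb' :: P => by
      have ih := fi_canB (pb' :: P)
      simp only [canB, List.map_cons] at ih ⊢
      refine List.isChain_cons_cons.mpr ⟨?_, ih⟩
      cases pb <;> cases pb' <;> simp [qinv]

lemma canAfix3 : ∀ (P : List Bool) (e j : ℕ), 3 ≤ e → e + P.length ≤ r j →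
    dualB r j e (canA P) = canA P
  | [], _, _, _, _ => rfl
  | pb :: P', e, j, he, hbd => by
      simp only [List.length_cons] at hbd
      cases pb
      · -- bi
        simp only [canA, List.map_cons, if_neg (by simp : ¬(false = true))] at *
        simp only [dualB_cons]
        rw [phiB_id3 e _ (by omega) (by omega), psiB_bi _ _ (by omega) (by omega)]
        have := canAfix3 P' e j he (by omega)
        simp only [canA] at this
        rw [this]
      · simp only [canA, List.map_cons, if_pos rfl, if_true] at *
        simp only [dualB_cons]
        rw [phiB_id3 e _ (by omega) (by omega), psiB_a _ _ (by omega)]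
        have := canAfix3 P' (e + 1) j (by omega) (by omega)
        simp only [canA] at this
        rw [this]

lemma canAfix (P' : List Bool) (j : ℕ) (hbd : P'.length + 3 ≤ r j) :
    dualB r j 2 (canA (true :: P')) = canA (true :: P') := by
  simp only [canA, List.map_cons, if_pos rfl, if_true, dualB_cons]
  rw [show phiB 2 Qpm.a = Qpm.a from rfl, psiB_a _ _ (by omega)]
  have := canAfix3 r P' 3 j (by omega) (by omega)
  simp only [canA] at this
  rw [this]

lemma canBfix : ∀ (P : List Bool) (e j : ℕ), P.length + 2 ≤ e → e ≤ r j →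
    dualB r j e (canB P) = canB P
  | [], _, _, _, _ => rfl
  | pb :: P', e, j, hlo, hhi => by
      simp only [List.length_cons] at hlo
      cases pb
      · -- ai
        simp only [canB, List.map_cons, if_neg (by simp : ¬(false = true))] at *
        simp only [dualB_cons]
        rw [phiB_id3 e _ (by omega) (by omega), psiB_ai _ _ (by omega)]
        have := canBfix P' (e - 1) j (by omega) (by omega)
        simp only [canB] at this
        rw [this]
      · simp only [canB, List.map_cons, if_pos rfl, if_true] at *
        simp only [dualB_cons]
        rw [phiB_id3 e _ (by omega) (by omega), psiB_b _ _ (by omega) (by omega)]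
        have := canBfix P' e j (by omega) (by omega)
        simp only [canB] at this
        rw [this]

lemma canBfix1 (P' : List Bool) (j : ℕ) (hbd : P'.length + 2 ≤ r j) :
    dualB r j 1 (canB (false :: P')) = canB (false :: P') := by
  simp only [canB, List.map_cons, if_neg (by simp : ¬(false = true)), dualB_cons]
  rw [show phiB 1 Qpm.ai = Qpm.ai from rfl, psiB_ai_one]
  have := canBfix r P' (r j) j (by omega) le_rfl
  simp only [canB] at this
  rw [this]

end Canonical
section Main

lemma qinv_til (q : Qpm) : qinv (til q) = til (qinv q) := by cases q <;> rfl

lemma oLet_of_patt {a b : Qpm} (h : patt a = patt b) : oLet a = oLet b := by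
  simp [oLet, h]

lemma fLet_of_ne {s q : Qpm} (h : patt s ≠ patt q) : fLet (patt s) = oLet q := by
  cases hq : patt q <;> cases hs : patt s <;> simp_all [fLet, oLet]

lemma tpow_self {k : ℕ} {q : Qpm} (h : k % 2 = 0) : tpow k q = q := by
  simp [tpow, h]

lemma tpow_til {k : ℕ} {q : Qpm} (h : k % 2 = 1) : tpow k q = til q := by
  simp [tpow, h]

lemma TPgen (r : ℕ → ℕ) (hmono : Monotone r) (hge : ∀ j, 2 ≤ r j) :
    ∀ (n : ℕ) (i : ℕ) (ξ η : List Qpm), ξ.length = n → FreelyIrred ξ →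
      FreelyIrred η → ξ.map patt = η.map patt → 2 * n + 6 ≤ r i →
      ∀ c : ℕ, (c = 1 ∨ c = 2) → (∀ q t, ξ = q :: t → c = oLet q) →
      ∀ ε : ℕ, ∃ w : List ℕ,
        ValidB r i w ∧ dualWB r i w ξ = η ∧ w.count c % 2 = ε % 2 := by
  intro n
  induction n with
  | zero =>
      intro i ξ η hlen hfξ hfη hp hbd c hc _ ε
      have hξ : ξ = [] := List.length_eq_zero_iff.mp hlen
      subst hξ
      have hη : η = [] := by
        have := congrArg List.length hp
        simpa using List.length_eq_zero_iff.mp (by simpa using this.symm)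
      subst hη
      rcases Nat.even_or_odd ε with he | he
      · exact ⟨[], trivial, rfl, by simp [Nat.even_iff.mp he]⟩
      · refine ⟨[c], ⟨by simp [Set.mem_Icc]; have := hge i; omega, trivial⟩,
          by simp [dualWB_nil_list], ?_⟩
        simp [List.count_cons, Nat.odd_iff.mp he]
  | succ m IH =>
      intro i₀ ξ₀ η₀ hlen₀ hfξ₀ hfη₀ hp₀ hbd₀ c₀ hc₀ hhead₀ ε₀
      -- Step 1: plain transitivity at length m + 1
      have T : ∀ (j : ℕ) (ξ η : List Qpm), ξ.length = m + 1 → FreelyIrred ξ →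
          FreelyIrred η → ξ.map patt = η.map patt → 2 * (m + 1) + 6 ≤ r j →
          ∃ w : List ℕ, ValidB r j w ∧ dualWB r j w ξ = η := by
        intro j ξ η hlen hfξ hfη hp hbd
        rcases ξ with _ | ⟨q, t⟩
        · simp at hlen
        rcases η with _ | ⟨q', u⟩
        · simp at hp
        have hlent : t.length = m := by simpa using hlen
        simp only [List.map_cons, List.cons.injEq] at hp
        have hpq : patt q' = patt q := hp.1.symm
        have hpt : t.map patt = u.map patt := hp.2
        set c : ℕ := oLet q with hcdef
        have hcc : c = 1 ∨ c = 2 := oLet_cases q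
        have hybound : 2 * m + 6 ≤ r j := by omega
        -- get the tail word y with the right parity of c
        have hy : ∃ y : List ℕ, ValidB r j y ∧ dualWB r j y t = u ∧
            y.count c % 2 = (if q' = q then 0 else 1) % 2 := by
          rcases t with _ | ⟨s, t'⟩
          · have hu : u = [] := by
              have := congrArg List.length hpt
              simpa using List.length_eq_zero_iff.mp (by simpa using this.symm)
            subst hu
            by_cases hqq : q' = q
            · exact ⟨[], trivial, rfl, by simp [hqq]⟩
            · refine ⟨[c], ⟨by simp [Set.mem_Icc]; have := hge j; omega, trivial⟩,
                by simp [dualWB_nil_list], ?_⟩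
              simp [List.count_cons, hqq]
          · rcases u with _ | ⟨s', u'⟩
            · simp at hpt
            have hfs : patt s' = patt s := by
              simp only [List.map_cons, List.cons.injEq] at hpt
              exact hpt.1.symm
            by_cases hps : patt s = patt q
            · -- same pattern: the free letter of the tail is c
              have : oLet s = c := by rw [hcdef]; exact oLet_of_patt hps
              obtain ⟨y, hyv, hyd, hyc⟩ := IH j (s :: t') (s' :: u')
                (by simpa using hlent) hfξ.tail hfη.tail hpt hybound
                c hcc (fun a tt hat => by
                  rw [← this]; injection hat with h1 _; rw [h1])
                (if q' = q then 0 else 1)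
              exact ⟨y, hyv, hyd, hyc⟩
            · -- pattern boundary: the count of c is forced, use any parity
              obtain ⟨y, hyv, hyd, _⟩ := IH j (s :: t') (s' :: u')
                (by simpa using hlent) hfξ.tail hfη.tail hpt hybound
                (oLet s) (oLet_cases s) (fun a tt hat => by
                  injection hat with h1 _; rw [h1]) 0
              refine ⟨y, hyv, hyd, ?_⟩
              have hflet : fLet (patt s) = c := fLet_of_ne hps
              have hhd := head_dualWB r y j s t'
              rw [hyd] at hhd
              simp only [List.head?_cons, Option.some.injEq] at hhd
              have hsforced : s = til (qinv q) :=
                qpm_forced q s hps (List.isChain_cons_cons.mp hfξ).1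
              have hs'forced : s' = til (qinv q') := by
                refine qpm_forced q' s' ?_ (List.isChain_cons_cons.mp hfη).1
                rw [hfs, hpq]; exact hps
              rw [← hflet]
              by_cases hqq : q' = q
              · subst hqq
                have hss : s' = s := by rw [hs'forced, hsforced]
                rw [hss] at hhd
                rcases Nat.mod_two_eq_zero_or_one (y.count (fLet (patt s)))
                  with h0 | h1
                · simp [h0]
                · exfalso
                  rw [tpow_til h1] at hhd
                  exact til_ne s hhd.symm
              · have hq' : q' = til q := by
                  rcases qpm_same_patt q q' hpq with h | h
                  · exact absurd h hqq
                  · exact h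
                have hss : s' = til s := by
                  rw [hs'forced, hq', qinv_til, hsforced]
                rw [hss] at hhd
                rcases Nat.mod_two_eq_zero_or_one (y.count (fLet (patt s)))
                  with h0 | h1
                · exfalso
                  rw [tpow_self h0] at hhd
                  exact til_ne s hhd
                · simp [h1, hqq]
        obtain ⟨y, hyv, hyd, hyc⟩ := hy
        refine ⟨buildX r j q y, buildX_valid r y j q hge hyv, ?_⟩
        rw [buildX_cons r y j q t hge hyv, hyd]
        congr 1
        by_cases hqq : q' = q
        · rw [hqq]
          apply tpow_self
          simpa [hqq] using hyc
        · rcases qpm_same_patt q q' hpq with h | h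
          · exact absurd h hqq
          · rw [h]
            apply tpow_til
            simpa [hqq] using hyc
      -- Step 2: odd identity gadget at length m + 1
      have G : ∀ (j : ℕ) (χ : List Qpm), χ.length = m + 1 → FreelyIrred χ →
          2 * (m + 1) + 6 ≤ r j → ∀ c : ℕ, (∀ q t, χ = q :: t → c = oLet q) →
          ∃ g : List ℕ, ValidB r j g ∧ dualWB r j g χ = χ ∧ g.count c % 2 = 1 := by
        intro j χ hlen hfχ hbd c hhead
        rcases χ with _ | ⟨q, t⟩
        · simp at hlen
        have hc : c = oLet q := hhead q t rfl
        set P : List Bool := (q :: t).map patt with hPdef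
        have hPlen : P.length = m + 1 := by
          rw [hPdef, List.length_map]; exact hlen
        -- choose the canonical fixed word
        obtain ⟨can, hcanfi, hcanpatt, hcanfix⟩ :
            ∃ can : List Qpm, FreelyIrred can ∧ can.map patt = P ∧
              ∀ k, 2 * (m + 1) + 6 ≤ r k → dualB r k c can = can := by
          cases hq : patt q
          · -- pattern *⁻¹ : canonical is ai-headed, c = 1
            have hc1 : c = 1 := by rw [hc]; simp [oLet, hq]
            refine ⟨canB P, fi_canB P, canB_patt P, fun k hk => ?_⟩
            have : P = false :: t.map patt := by simp [hPdef, hq]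
            rw [hc1, this]
            apply canBfix1
            have htm : t.length = m := by
              simp only [List.length_cons] at hlen; omega
            simp only [List.length_map, htm]; omega
          · have hc2 : c = 2 := by rw [hc]; simp [oLet, hq]
            refine ⟨canA P, fi_canA P, canA_patt P, fun k hk => ?_⟩
            have : P = true :: t.map patt := by simp [hPdef, hq]
            rw [hc2, this]
            apply canAfix
            have htm : t.length = m := by
              simp only [List.length_cons] at hlen; omega
            simp only [List.length_map, htm]; omega
        have hcanlen : can.length = m + 1 := by
          have := congrArg List.length hcanpatt
          simpa [hPlen] using this
        obtain ⟨w, hwv, hwd⟩ := T j (q :: t) can hlen hfχ hcanfi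
          (by rw [hcanpatt]) hbd
        set g : List ℕ := w ++ ([c] ++ revUndo r (m + 1) j w (j + w.length + 1)) with hg
        have hcbd : 1 ≤ c ∧ c ≤ 2 := by rw [hc]; rcases oLet_cases q with h | h <;> omega
        refine ⟨g, ?_, ?_, ?_⟩
        · refine validB_append r j _ _ hwv ?_
          refine ⟨by simp [Set.mem_Icc]; have := hge (j + w.length); omega, ?_⟩
          have := revUndo_valid r (m + 1) hmono w j (j + w.length + 1) hwv (by omega)
          simpa [Nat.add_assoc] using this
        · rw [hg, dualWB_append, hwd, List.singleton_append, dualWB_cons]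
          rw [hcanfix (j + w.length) (le_trans hbd (hmono (Nat.le_add_right j w.length)))]
          have := revUndo_spec r hmono (m + 1) w j (j + w.length + 1) (q :: t) hwv hlen
            (by omega) (by omega)
          rw [hwd] at this
          simpa [Nat.add_assoc] using this
        · rw [hg]
          simp only [List.count_append, List.count_cons, List.count_nil]
          rw [revUndo_count r (m + 1) c hcbd.2 (by omega) w j (j + w.length + 1)
            (fun k hk => le_trans (by omega) (hmono hk))]
          simp; omega
      -- Step 3: combine
      obtain ⟨w₀, hw₀v, hw₀d⟩ := T i₀ ξ₀ η₀ hlen₀ hfξ₀ hfη₀ hp₀ hbd₀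
      by_cases hpar : w₀.count c₀ % 2 = ε₀ % 2
      · exact ⟨w₀, hw₀v, hw₀d, hpar⟩
      · have hηlen : η₀.length = m + 1 := by
          have := congrArg List.length hp₀
          simp at this; omega
        have hbd' : 2 * (m + 1) + 6 ≤ r (i₀ + w₀.length) :=
          le_trans hbd₀ (hmono (by omega))
        have hheadη : ∀ q t, η₀ = q :: t → c₀ = oLet q := by
          intro q t hqt
          rcases ξ₀ with _ | ⟨a₀, t₀⟩
          · simp at hlen₀
          have h1 : c₀ = oLet a₀ := hhead₀ a₀ t₀ rfl
          have h2 : patt a₀ = patt q := by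
            rw [hqt] at hp₀
            simpa using congrArg List.head? hp₀
          rw [h1]; exact oLet_of_patt h2
        obtain ⟨g, hgv, hgd, hgc⟩ := G (i₀ + w₀.length) η₀ hηlen hfη₀ hbd' c₀ hheadη
        refine ⟨w₀ ++ g, validB_append r i₀ _ _ hw₀v hgv, ?_, ?_⟩
        · rw [dualWB_append, hw₀d, hgd]
        · rw [List.count_append]
          omega

end Main
/-- for freely irreducible words `ξ, η, ζ` following the same
pattern and any `k`, there are words `w, v ∈ X*₍₁₎` with `|w| = |v| ≥ k`,
`D_{1,w}(ξ) = η` and `D_{1,v}(ξ) = ζ`. -/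
theorem dual_action_simultaneous_transitivity
    (r : ℕ → ℕ) (hmono : Monotone r) (hge : ∀ i, 2 ≤ r i)
    (hunb : ∀ N, ∃ i, N < r i)
    (ξ η ζ : List Qpm) (hξ : FreelyIrred ξ) (hη : FreelyIrred η)
    (hζ : FreelyIrred ζ)
    (hp1 : ξ.map patt = η.map patt) (hp2 : ξ.map patt = ζ.map patt) :
    ∀ k : ℕ, ∃ w v : List ℕ,
      ValidB r 1 w ∧ ValidB r 1 v ∧ w.length = v.length ∧ k ≤ w.length ∧
      dualWB r 1 w ξ = η ∧ dualWB r 1 v ξ = ζ := by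
  intro k
  set n := ξ.length with hn
  obtain ⟨i₁, hi₁⟩ := hunb (2 * n + 6)
  set i₀ := max i₁ 1 with hi₀
  have hi₀1 : 1 ≤ i₀ := le_max_right i₁ 1
  have hri₀ : 2 * n + 6 ≤ r i₀ := by
    have h2 : r i₁ ≤ r i₀ := hmono (by rw [hi₀]; exact le_max_left i₁ 1)
    omega
  -- burn-in prefix
  set wb : List ℕ := List.replicate (i₀ - 1) 1 with hwb
  have hwbv : ValidB r 1 wb := by
    apply validB_replicate
    intro j _
    exact ⟨le_rfl, by have := hge j; omega⟩
  set ξ' : List Qpm := dualWB r 1 wb ξ with hξ'def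
  have hξ'fi : FreelyIrred ξ' := fi_dualWB r 1 wb ξ hge hwbv hξ
  have hξ'patt : ξ'.map patt = ξ.map patt := map_patt_dualWB r 1 wb ξ
  have hξ'len : ξ'.length = n := by rw [hξ'def, length_dualWB]
  have hηlen : η.length = n := by
    have := congrArg List.length hp1; simpa using this.symm
  have hζlen : ζ.length = n := by
    have := congrArg List.length hp2; simpa using this.symm
  -- choose the marked letter
  have hc : ∃ c : ℕ, (c = 1 ∨ c = 2) ∧ (∀ q t, ξ' = q :: t → c = oLet q) := by
    rcases ξ' with _ | ⟨q, t⟩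
    · exact ⟨1, Or.inl rfl, fun _ _ h => by simp at h⟩
    · exact ⟨oLet q, oLet_cases q, fun q' t' h => by
        injection h with h1 _; rw [h1]⟩
  obtain ⟨c, hcc, hchead⟩ := hc
  obtain ⟨w₁, hw₁v, hw₁d, _⟩ := TPgen r hmono hge n i₀ ξ' η hξ'len hξ'fi hη
    (by rw [hξ'patt]; exact hp1) hri₀ c hcc hchead 0
  obtain ⟨v₁, hv₁v, hv₁d, _⟩ := TPgen r hmono hge n i₀ ξ' ζ hξ'len hξ'fi hζ
    (by rw [hξ'patt]; exact hp2) hri₀ c hcc hchead 0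
  set L := max w₁.length v₁.length + k with hL
  set e : ℕ := n + 2 with he
  have hpad : ∀ (u : List Qpm) (m j : ℕ), u.length = n → i₀ ≤ j →
      dualWB r j (List.replicate m e) u = u := by
    intro u m j hu hj
    apply pad_id
    intro kk hkk
    constructor
    · omega
    · have : r i₀ ≤ r kk := hmono (by omega)
      omega
  have hpadv : ∀ (m j : ℕ), i₀ ≤ j → ValidB r j (List.replicate m e) := by
    intro m j hj
    apply validB_replicate
    intro kk hkk
    have : r i₀ ≤ r kk := hmono (by omega)
    constructor <;> omega
  refine ⟨wb ++ (w₁ ++ List.replicate (L - w₁.length) e),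
          wb ++ (v₁ ++ List.replicate (L - v₁.length) e), ?_, ?_, ?_, ?_, ?_, ?_⟩
  · refine validB_append r 1 _ _ hwbv ?_
    have h1 : 1 + wb.length = i₀ := by simp [hwb]; omega
    rw [h1]
    refine validB_append r i₀ _ _ hw₁v (hpadv _ _ (by omega))
  · refine validB_append r 1 _ _ hwbv ?_
    have h1 : 1 + wb.length = i₀ := by simp [hwb]; omega
    rw [h1]
    refine validB_append r i₀ _ _ hv₁v (hpadv _ _ (by omega))
  · simp only [List.length_append, List.length_replicate]
    have h1 : w₁.length ≤ L := by omega
    have h2 : v₁.length ≤ L := by omega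
    omega
  · simp only [List.length_append, List.length_replicate]
    have h1 : w₁.length ≤ L := by omega
    omega
  · rw [dualWB_append]
    have h1 : 1 + wb.length = i₀ := by simp [hwb]; omega
    rw [h1, ← hξ'def, dualWB_append, hw₁d]
    exact hpad η _ _ hηlen (by omega)
  · rw [dualWB_append]
    have h1 : 1 + wb.length = i₀ := by simp [hwb]; omega
    rw [h1, ← hξ'def, dualWB_append, hv₁d]
    exact hpad ζ _ _ hζlen (by omega)
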